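/- The circular variance σ²(κ) = 1 - I₁(κ)/I₀(κ) of the von Mises distribution tends to 0 as κ → ∞. More precisely, σ²(κ) = 1/(2κ) + O(1/κ²) as κ → ∞. -/

import Mathlib

open Real Filter Asymptotics intervalIntegral

open Set MeasureTheory

lemma vm_hasDeriv (κ : ℝ) {t : ℝ} (hc : Real.cos (t/2) ≠ 0) :
    HasDerivAt (fun s => -2 * Real.tan (s/2) * Real.exp (κ * Real.cos s))
      ((2*κ*(1 - Real.cos t) - 1 - Real.tan (t/2)^2) * Real.exp (κ * Real.cos t)) t := by
  have h1 : HasDerivAt (fun s : ℝ => s/2) (1/2) t := by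
    simpa using (hasDerivAt_id t).div_const 2
  have h2 : HasDerivAt (fun s : ℝ => Real.tan (s/2)) (1/Real.cos (t/2)^2 * (1/2)) t :=
    (Real.hasDerivAt_tan hc).comp (h₂ := Real.tan) t h1
  have h3 : HasDerivAt (fun s : ℝ => Real.exp (κ * Real.cos s))
      (Real.exp (κ * Real.cos t) * (κ * (-Real.sin t))) t :=
    ((Real.hasDerivAt_cos t).const_mul κ).exp
  have h4 := (h2.const_mul (-2)).mul h3
  convert h4 using 1
  · rfl
  · rfl
  · rfl
  have hsin : Real.sin t = 2 * Real.sin (t/2) * Real.cos (t/2) := by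
    rw [← Real.sin_two_mul]; ring_nf
  have hcos : Real.cos t = 2 * Real.cos (t/2)^2 - 1 := by
    have h := Real.cos_two_mul (t/2); rw [show 2*(t/2) = t by ring] at h; linarith
  have hpyth := Real.sin_sq_add_cos_sq (t/2)
  rw [Real.tan_eq_sin_div_cos]
  rw [hsin]
  nth_rewrite 1 [hcos]
  field_simp
  linear_combination (-(1 + 4*κ*Real.cos (t/2)^2)) * hpyth

lemma vm_cos_half_pos {t : ℝ} (ht : t ∈ Set.uIcc 0 (π/2)) : 0 < Real.cos (t/2) := by
  rw [Set.uIcc_of_le (by positivity)] at ht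
  apply Real.cos_pos_of_mem_Ioo
  constructor
  · nlinarith [ht.1, Real.pi_pos]
  · nlinarith [ht.2, Real.pi_pos]

lemma vm_tan_contOn : ContinuousOn (fun t => Real.tan (t/2)) (Set.uIcc 0 (π/2)) := by
  intro t ht
  have h1 : ContinuousAt (fun s : ℝ => s/2) t := by fun_prop
  have h2 : ContinuousAt (Real.tan ∘ fun s : ℝ => s/2) t :=
    ContinuousAt.comp (Real.continuousAt_tan.2 (vm_cos_half_pos ht).ne') h1
  exact h2.continuousWithinAt

lemma vm_P1 (κ : ℝ) :
    ∫ t in (0:ℝ)..(π/2), (2*κ*(1 - Real.cos t) - 1) * Real.exp (κ * Real.cos t)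
      = -2 + ∫ t in (0:ℝ)..(π/2), Real.tan (t/2)^2 * Real.exp (κ * Real.cos t) := by
  have hE : Continuous (fun t => Real.exp (κ * Real.cos t)) := by continuity
  have hInt1 : IntervalIntegrable (fun t => (2*κ*(1 - Real.cos t) - 1) * Real.exp (κ * Real.cos t))
      volume 0 (π/2) := (by continuity : Continuous _).intervalIntegrable _ _
  have hInt2 : IntervalIntegrable (fun t => Real.tan (t/2)^2 * Real.exp (κ * Real.cos t))
      volume 0 (π/2) :=
    (((vm_tan_contOn.pow 2).mul hE.continuousOn)).intervalIntegrable
  have hInt3 : IntervalIntegrable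
      (fun t => (2*κ*(1 - Real.cos t) - 1 - Real.tan (t/2)^2) * Real.exp (κ * Real.cos t))
      volume 0 (π/2) := by
    have : ContinuousOn
        (fun t => (2*κ*(1 - Real.cos t) - 1 - Real.tan (t/2)^2) * Real.exp (κ * Real.cos t))
        (Set.uIcc 0 (π/2)) := by
      apply ContinuousOn.mul _ hE.continuousOn
      exact (((continuous_const.mul (continuous_const.sub Real.continuous_cos)).sub
        continuous_const).continuousOn).sub (vm_tan_contOn.pow 2)
    exact this.intervalIntegrable
  have hftc : ∫ t in (0:ℝ)..(π/2),
      (2*κ*(1 - Real.cos t) - 1 - Real.tan (t/2)^2) * Real.exp (κ * Real.cos t) = -2 := by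
    rw [integral_eq_sub_of_hasDerivAt (fun t ht => vm_hasDeriv κ (vm_cos_half_pos ht).ne') hInt3]
    norm_num [Real.cos_pi_div_two, show (π/2)/2 = π/4 from by ring, Real.tan_pi_div_four]
  have := integral_add hInt3 hInt2
  calc ∫ t in (0:ℝ)..(π/2), (2*κ*(1 - Real.cos t) - 1) * Real.exp (κ * Real.cos t)
      = ∫ t in (0:ℝ)..(π/2),
        ((2*κ*(1 - Real.cos t) - 1 - Real.tan (t/2)^2) * Real.exp (κ * Real.cos t)
          + Real.tan (t/2)^2 * Real.exp (κ * Real.cos t)) := by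
        apply intervalIntegral.integral_congr; intro t ht; ring
    _ = -2 + ∫ t in (0:ℝ)..(π/2), Real.tan (t/2)^2 * Real.exp (κ * Real.cos t) := by
        rw [this, hftc]
lemma vm_pointwise {κ t : ℝ} (hκ : 1 ≤ κ) (ht0 : 0 ≤ t) (ht1 : t ≤ π/2) :
    Real.tan (t/2)^2 * Real.exp (κ * Real.cos t)
      ≤ (5 * Real.exp κ / κ) * Real.exp (-(κ/10) * t^2) := by
  have hκ0 : (0:ℝ) < κ := by linarith
  have hpi : π ≤ 3.15 := by linarith [Real.pi_lt_d2]
  have hpi0 := Real.pi_pos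
  -- tan(t/2)^2 ≤ t^2/2
  have hs : Real.sin (t/2) ≤ t/2 := Real.sin_le (by linarith)
  have hs0 : 0 ≤ Real.sin (t/2) := Real.sin_nonneg_of_nonneg_of_le_pi (by linarith) (by nlinarith)
  have hc : Real.sqrt 2 / 2 ≤ Real.cos (t/2) := by
    rw [← Real.cos_pi_div_four]
    exact Real.cos_le_cos_of_nonneg_of_le_pi (by linarith) (by nlinarith) (by nlinarith)
  have hsqrt2 : (Real.sqrt 2)^2 = 2 := Real.sq_sqrt (by norm_num)
  have hsqrt2' : (0:ℝ) ≤ Real.sqrt 2 := Real.sqrt_nonneg 2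
  have hc2 : (1:ℝ)/2 ≤ Real.cos (t/2)^2 := by nlinarith
  have hc0 : (0:ℝ) < Real.cos (t/2)^2 := by linarith
  have htan : Real.tan (t/2)^2 ≤ t^2/2 := by
    rw [Real.tan_eq_sin_div_cos, div_pow, div_le_iff₀ hc0]
    nlinarith
  -- exp(κ cos t) ≤ exp κ * exp(-(κ/5) t^2)
  have hcos : Real.cos t ≤ 1 - t^2/5 := by
    have h := Real.cos_le_one_sub_mul_cos_sq (x := t) (by rw [abs_of_nonneg ht0]; linarith)
    have h5 : (1:ℝ)/5 ≤ 2/π^2 := by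
      rw [div_le_div_iff₀ (by norm_num) (by positivity)]; nlinarith
    nlinarith [mul_le_mul_of_nonneg_right h5 (sq_nonneg t)]
  have hE : Real.exp (κ * Real.cos t) ≤ Real.exp κ * Real.exp (-(κ/5) * t^2) := by
    rw [← Real.exp_add]
    apply Real.exp_le_exp.2
    nlinarith
  -- (t^2/2) * exp(-(κ/10) t^2) ≤ 5/κ
  have hx : κ/10 * t^2 ≤ Real.exp (κ/10 * t^2) := by
    linarith [Real.add_one_le_exp (κ/10 * t^2)]
  have h1 : (κ/10*t^2) * Real.exp (-(κ/10*t^2)) ≤ 1 := by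
    rw [Real.exp_neg, ← div_eq_mul_inv, div_le_one (Real.exp_pos _)]
    exact hx
  have hkey : t^2/2 * Real.exp (-(κ/10) * t^2) ≤ 5/κ := by
    have heq : -(κ/10) * t^2 = -(κ/10*t^2) := by ring
    rw [heq]
    calc t^2/2 * Real.exp (-(κ/10*t^2))
        = (5/κ) * ((κ/10*t^2) * Real.exp (-(κ/10*t^2))) := by field_simp; ring
      _ ≤ (5/κ) * 1 := mul_le_mul_of_nonneg_left h1 (by positivity)
      _ = 5/κ := mul_one _
  have htan0 : 0 ≤ Real.tan (t/2)^2 := sq_nonneg _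
  have hE0 : 0 ≤ Real.exp (κ * Real.cos t) := (Real.exp_pos _).le
  calc Real.tan (t/2)^2 * Real.exp (κ * Real.cos t)
      ≤ (t^2/2) * (Real.exp κ * Real.exp (-(κ/5) * t^2)) := by
        apply mul_le_mul htan hE hE0 (by positivity)
    _ = Real.exp κ * ((t^2/2) * Real.exp (-(κ/10) * t^2)) * Real.exp (-(κ/10) * t^2) := by
        rw [show -(κ/5) * t^2 = (-(κ/10)*t^2) + (-(κ/10)*t^2) by ring, Real.exp_add]; ring
    _ ≤ Real.exp κ * (5/κ) * Real.exp (-(κ/10) * t^2) := by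
        apply mul_le_mul_of_nonneg_right _ (Real.exp_pos _).le
        exact mul_le_mul_of_nonneg_left hkey (Real.exp_pos _).le
    _ = (5 * Real.exp κ / κ) * Real.exp (-(κ/10) * t^2) := by ring
lemma vm_T_bound {κ : ℝ} (hκ : 1 ≤ κ) :
    ∫ t in (0:ℝ)..(π/2), Real.tan (t/2)^2 * Real.exp (κ * Real.cos t)
      ≤ 15 * Real.exp κ / (κ * Real.sqrt κ) := by
  have hκ0 : (0:ℝ) < κ := by linarith
  have hpi2 : (0:ℝ) ≤ π/2 := by positivity
  have hE : Continuous (fun t => Real.exp (κ * Real.cos t)) := by continuity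
  have hInt2 : IntervalIntegrable (fun t => Real.tan (t/2)^2 * Real.exp (κ * Real.cos t))
      volume 0 (π/2) := (((vm_tan_contOn.pow 2).mul hE.continuousOn)).intervalIntegrable
  have hIntG : IntervalIntegrable (fun t => (5 * Real.exp κ / κ) * Real.exp (-(κ/10) * t^2))
      volume 0 (π/2) := (by continuity : Continuous _).intervalIntegrable _ _
  have h1 : ∫ t in (0:ℝ)..(π/2), Real.tan (t/2)^2 * Real.exp (κ * Real.cos t)
      ≤ ∫ t in (0:ℝ)..(π/2), (5 * Real.exp κ / κ) * Real.exp (-(κ/10) * t^2) := by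
    apply intervalIntegral.integral_mono_on hpi2 hInt2 hIntG
    intro t ht
    exact vm_pointwise hκ ht.1 ht.2
  have h2 : ∫ t in (0:ℝ)..(π/2), Real.exp (-(κ/10) * t^2)
      ≤ Real.sqrt (π / (κ/10)) / 2 := by
    rw [← integral_gaussian_Ioi (κ/10)]
    rw [intervalIntegral.integral_of_le hpi2]
    apply MeasureTheory.setIntegral_mono_set
    · exact (integrable_exp_neg_mul_sq (by positivity)).integrableOn
    · filter_upwards with x using (Real.exp_pos _).le
    · filter_upwards with x hx
      exact Set.Ioc_subset_Ioi_self hx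
  have h3 : Real.sqrt (π / (κ/10)) ≤ 6 / Real.sqrt κ := by
    rw [show π / (κ/10) = 10*π/κ by ring,
      Real.sqrt_div (by positivity : (0:ℝ) ≤ 10*π)]
    have h36 : Real.sqrt (10*π) ≤ 6 := by
      rw [show (6:ℝ) = Real.sqrt 36 by
        rw [show (36:ℝ) = 6^2 by norm_num, Real.sqrt_sq (by norm_num : (0:ℝ) ≤ 6)]]
      exact Real.sqrt_le_sqrt (by nlinarith [Real.pi_lt_d2])
    gcongr
  have hsq : 0 < Real.sqrt κ := Real.sqrt_pos.2 hκ0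
  calc ∫ t in (0:ℝ)..(π/2), Real.tan (t/2)^2 * Real.exp (κ * Real.cos t)
      ≤ ∫ t in (0:ℝ)..(π/2), (5 * Real.exp κ / κ) * Real.exp (-(κ/10) * t^2) := h1
    _ = (5 * Real.exp κ / κ) * ∫ t in (0:ℝ)..(π/2), Real.exp (-(κ/10) * t^2) := by
        rw [intervalIntegral.integral_const_mul]
    _ ≤ (5 * Real.exp κ / κ) * (Real.sqrt (π / (κ/10)) / 2) := by
        apply mul_le_mul_of_nonneg_left (by linarith) (by positivity)
    _ ≤ (5 * Real.exp κ / κ) * ((6 / Real.sqrt κ) / 2) := by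
        apply mul_le_mul_of_nonneg_left (by linarith) (by positivity)
    _ = 15 * Real.exp κ / (κ * Real.sqrt κ) := by field_simp; ring
lemma vm_G_cont (κ : ℝ) :
    Continuous (fun t => (2*κ*(1 - Real.cos t) - 1) * Real.exp (κ * Real.cos t)) := by
  continuity

lemma vm_P2_bound {κ : ℝ} (hκ : 0 ≤ κ) :
    |∫ t in (π/2)..π, (2*κ*(1 - Real.cos t) - 1) * Real.exp (κ * Real.cos t)|
      ≤ (4*κ+1) * (π/2) := by
  have h := intervalIntegral.norm_integral_le_of_norm_le_const
    (C := 4*κ+1) (a := π/2) (b := π)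
    (f := fun t => (2*κ*(1 - Real.cos t) - 1) * Real.exp (κ * Real.cos t)) ?_
  · rw [Real.norm_eq_abs] at h
    calc |∫ t in (π/2)..π, (2*κ*(1 - Real.cos t) - 1) * Real.exp (κ * Real.cos t)|
        ≤ (4*κ+1) * |π - π/2| := h
      _ = (4*κ+1) * (π/2) := by rw [abs_of_nonneg (by linarith [Real.pi_pos] : (0:ℝ) ≤ π - π/2)]; ring_nf
  · intro x hx
    rw [Set.uIoc_of_le (by linarith [Real.pi_pos])] at hx
    have hc0 : Real.cos x ≤ 0 :=
      Real.cos_nonpos_of_pi_div_two_le_of_le hx.1.le (by linarith [hx.2, Real.pi_pos])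
    have hc1 : -1 ≤ Real.cos x := Real.neg_one_le_cos x
    have hE1 : Real.exp (κ * Real.cos x) ≤ 1 := by
      rw [show (1:ℝ) = Real.exp 0 by simp]
      exact Real.exp_le_exp.2 (by nlinarith)
    have hE0 : 0 < Real.exp (κ * Real.cos x) := Real.exp_pos _
    rw [Real.norm_eq_abs, abs_mul, abs_of_pos hE0]
    have : |2*κ*(1 - Real.cos x) - 1| ≤ 4*κ+1 := by
      rw [abs_le]; constructor <;> nlinarith
    nlinarith [abs_nonneg (2*κ*(1 - Real.cos x) - 1)]

lemma vm_symm (κ : ℝ) :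
    ∫ t in (0:ℝ)..(2*π), (2*κ*(1 - Real.cos t) - 1) * Real.exp (κ * Real.cos t)
      = 2 * ∫ t in (0:ℝ)..π, (2*κ*(1 - Real.cos t) - 1) * Real.exp (κ * Real.cos t) := by
  have hInt : ∀ a b : ℝ, IntervalIntegrable
      (fun t => (2*κ*(1 - Real.cos t) - 1) * Real.exp (κ * Real.cos t)) volume a b :=
    fun a b => (vm_G_cont κ).intervalIntegrable a b
  rw [← intervalIntegral.integral_add_adjacent_intervals (hInt 0 π) (hInt π (2*π))]
  have h := intervalIntegral.integral_comp_sub_left (a := 0) (b := π)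
    (fun t => (2*κ*(1 - Real.cos t) - 1) * Real.exp (κ * Real.cos t)) (2*π)
  have h2 : ∫ t in (0:ℝ)..π, (2*κ*(1 - Real.cos (2*π - t)) - 1) * Real.exp (κ * Real.cos (2*π - t))
      = ∫ t in (0:ℝ)..π, (2*κ*(1 - Real.cos t) - 1) * Real.exp (κ * Real.cos t) := by
    apply intervalIntegral.integral_congr
    intro t ht
    simp [Real.cos_sub, Real.cos_two_pi, Real.sin_two_pi]
  rw [h2] at h
  rw [show (2*π - π) = π by ring, show (2*π - 0) = 2*π by ring] at h
  rw [← h]; ring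

lemma vm_S_bound : ∀ᶠ κ : ℝ in atTop,
    |∫ t in (0:ℝ)..(2*π), (2*κ*(1 - Real.cos t) - 1) * Real.exp (κ * Real.cos t)|
      ≤ 32 * Real.exp κ / (κ * Real.sqrt κ) := by
  filter_upwards [eventually_ge_atTop (1:ℝ),
    (Real.tendsto_exp_div_pow_atTop 3).eventually_ge_atTop 12] with κ hκ hexp
  have hκ0 : (0:ℝ) < κ := by linarith
  have hpi := Real.pi_pos
  have hpi4 : π ≤ 4 := by nlinarith [Real.pi_lt_d2]
  have hInt : ∀ a b : ℝ, IntervalIntegrable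
      (fun t => (2*κ*(1 - Real.cos t) - 1) * Real.exp (κ * Real.cos t)) volume a b :=
    fun a b => (vm_G_cont κ).intervalIntegrable a b
  rw [vm_symm κ, ← intervalIntegral.integral_add_adjacent_intervals (hInt 0 (π/2)) (hInt (π/2) π)]
  rw [vm_P1 κ]
  set T := ∫ t in (0:ℝ)..(π/2), Real.tan (t/2)^2 * Real.exp (κ * Real.cos t) with hT
  have hT0 : 0 ≤ T := by
    apply intervalIntegral.integral_nonneg (by positivity)
    intro t ht; positivity
  have hTle : T ≤ 15 * Real.exp κ / (κ * Real.sqrt κ) := vm_T_bound hκ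
  have hP2 := vm_P2_bound hκ0.le
  set P2 := ∫ t in (π/2)..π, (2*κ*(1 - Real.cos t) - 1) * Real.exp (κ * Real.cos t)
  have hsκ : 0 < Real.sqrt κ := Real.sqrt_pos.2 hκ0
  have hsle : Real.sqrt κ ≤ κ := by
    nlinarith [Real.sq_sqrt hκ0.le, Real.sqrt_nonneg κ, Real.one_le_sqrt.2 hκ]
  have hE12 : 12 * κ^3 ≤ Real.exp κ := by
    rw [le_div_iff₀ (by positivity)] at hexp; linarith
  have htail : 24 * κ ≤ 2 * Real.exp κ / (κ * Real.sqrt κ) := by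
    rw [le_div_iff₀ (by positivity)]
    nlinarith [mul_le_mul_of_nonneg_left hsle (by positivity : (0:ℝ) ≤ 12*κ^2), hE12]
  have habs : |2 * (-2 + T + P2)| ≤ 2 * (2 + T + (4*κ+1)*(π/2)) := by
    rw [abs_mul, abs_of_nonneg (by norm_num : (0:ℝ) ≤ 2)]
    have := abs_le.1 hP2
    have h1 : |(-2 + T + P2)| ≤ 2 + T + (4*κ+1)*(π/2) := by
      rw [abs_le]; constructor <;> nlinarith [abs_nonneg P2]
    linarith
  calc |2 * (-2 + T + P2)| ≤ 2 * (2 + T + (4*κ+1)*(π/2)) := habs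
    _ ≤ 2 * T + 24 * κ := by nlinarith
    _ ≤ 2 * (15 * Real.exp κ / (κ * Real.sqrt κ)) + 2 * Real.exp κ / (κ * Real.sqrt κ) := by
        linarith
    _ = 32 * Real.exp κ / (κ * Real.sqrt κ) := by ring
lemma vm_B_lower {κ : ℝ} (hκ : 1 ≤ κ) :
    Real.exp κ / (2 * Real.sqrt κ) ≤ ∫ t in (0:ℝ)..(2*π), Real.exp (κ * Real.cos t) := by
  have hκ0 : (0:ℝ) < κ := by linarith
  have hs : 0 < Real.sqrt κ := Real.sqrt_pos.2 hκ0
  have hs1 : 1 ≤ Real.sqrt κ := Real.one_le_sqrt.2 hκ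
  have hsq : Real.sqrt κ * Real.sqrt κ = κ := Real.mul_self_sqrt hκ0.le
  set δ : ℝ := 1 / Real.sqrt κ with hδ
  have hδ0 : 0 < δ := by positivity
  have hδ1 : δ ≤ 1 := by rw [hδ, div_le_one hs]; exact hs1
  have hδ2π : δ ≤ 2*π := by nlinarith [Real.pi_gt_three]
  have hE : Continuous (fun t => Real.exp (κ * Real.cos t)) := by continuity
  have hsplit := intervalIntegral.integral_add_adjacent_intervals
    (hE.intervalIntegrable (μ := volume) 0 δ) (hE.intervalIntegrable (μ := volume) δ (2*π))
  have htail : 0 ≤ ∫ t in δ..(2*π), Real.exp (κ * Real.cos t) :=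
    intervalIntegral.integral_nonneg hδ2π (fun t _ => (Real.exp_pos _).le)
  have hhead : Real.exp κ / (2 * Real.sqrt κ) ≤ ∫ t in (0:ℝ)..δ, Real.exp (κ * Real.cos t) := by
    have hmono : ∫ t in (0:ℝ)..δ, (Real.exp κ / 2)
        ≤ ∫ t in (0:ℝ)..δ, Real.exp (κ * Real.cos t) := by
      apply intervalIntegral.integral_mono_on (μ := volume) hδ0.le
        (intervalIntegrable_const (μ := volume)) (hE.intervalIntegrable 0 δ)
      intro t ht
      have ht2 : t^2 ≤ 1/κ := by
        have : t ≤ δ := ht.2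
        have h2 : t^2 ≤ δ^2 := by nlinarith [ht.1]
        have hδsq : δ^2 = 1/κ := by rw [hδ, div_pow, one_pow, Real.sq_sqrt hκ0.le]
        linarith
      have hcos : 1 - t^2/2 ≤ Real.cos t := Real.one_sub_sq_div_two_le_cos
      have harg : κ - 1/2 ≤ κ * Real.cos t := by
        have hk1 : κ * (1/κ) = 1 := by field_simp
        nlinarith [mul_le_mul_of_nonneg_left ht2 hκ0.le,
          mul_le_mul_of_nonneg_left hcos hκ0.le]
      have hehalf : Real.exp (1/2 : ℝ) ≤ 2 := by
        have h := Real.exp_one_lt_d9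
        nlinarith [Real.exp_pos (1/2:ℝ), (by rw [← Real.exp_add]; norm_num :
          Real.exp (1/2:ℝ) * Real.exp (1/2:ℝ) = Real.exp 1)]
      calc Real.exp κ / 2 ≤ Real.exp κ / Real.exp (1/2) := by
            exact div_le_div_of_nonneg_left (Real.exp_pos κ).le (Real.exp_pos _) hehalf
        _ = Real.exp (κ - 1/2) := by rw [Real.exp_sub]
        _ ≤ Real.exp (κ * Real.cos t) := Real.exp_le_exp.2 harg
    rw [intervalIntegral.integral_const, smul_eq_mul] at hmono
    calc Real.exp κ / (2 * Real.sqrt κ) = (δ - 0) * (Real.exp κ / 2) := by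
          rw [hδ]; field_simp; ring
      _ ≤ _ := hmono
  linarith [hsplit, htail, hhead]
noncomputable def besselI0 (κ : ℝ) : ℝ :=
  (1 / (2 * Real.pi)) * ∫ t in (0 : ℝ)..(2 * Real.pi), Real.exp (κ * Real.cos t)

noncomputable def besselI1 (κ : ℝ) : ℝ :=
  (1 / (2 * Real.pi)) * ∫ t in (0 : ℝ)..(2 * Real.pi), Real.cos t * Real.exp (κ * Real.cos t)

noncomputable def circularVariance (κ : ℝ) : ℝ := 1 - besselI1 κ / besselI0 κ

set_option maxHeartbeats 1000000 in
theorem circularVariance_asymptotics :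
    Tendsto circularVariance atTop (nhds 0) ∧
      (fun κ : ℝ => circularVariance κ - 1 / (2 * κ)) =O[atTop]
        (fun κ : ℝ => 1 / κ ^ 2) := by
  have hO : (fun κ : ℝ => circularVariance κ - 1 / (2 * κ)) =O[atTop]
      (fun κ : ℝ => 1 / κ ^ 2) := by
    rw [isBigO_iff]
    refine ⟨32, ?_⟩
    filter_upwards [vm_S_bound, eventually_ge_atTop (1:ℝ)] with κ hS hκ
    have hκ0 : (0:ℝ) < κ := by linarith
    have hs : 0 < Real.sqrt κ := Real.sqrt_pos.2 hκ0
    have hsq : Real.sqrt κ * Real.sqrt κ = κ := Real.mul_self_sqrt hκ0.le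
    have hpi := Real.pi_pos
    set B := ∫ t in (0:ℝ)..(2*π), Real.exp (κ * Real.cos t) with hBdef
    set C := ∫ t in (0:ℝ)..(2*π), Real.cos t * Real.exp (κ * Real.cos t) with hCdef
    set S := ∫ t in (0:ℝ)..(2*π), (2*κ*(1 - Real.cos t) - 1) * Real.exp (κ * Real.cos t)
      with hSdef
    have hB : Real.exp κ / (2 * Real.sqrt κ) ≤ B := vm_B_lower hκ
    have hBpos : 0 < B := lt_of_lt_of_le (by positivity) hB
    -- S = 2κB - 2κC - B
    have hE : Continuous (fun t => Real.exp (κ * Real.cos t)) := by continuity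
    have hCE : Continuous (fun t => Real.cos t * Real.exp (κ * Real.cos t)) := by continuity
    have hS_eq : S = 2*κ*B - 2*κ*C - B := by
      rw [hSdef]
      have h1 : (∫ t in (0:ℝ)..(2*π),
          ((2*κ) * Real.exp (κ * Real.cos t) - (2*κ) * (Real.cos t * Real.exp (κ * Real.cos t))
            - Real.exp (κ * Real.cos t)))
          = 2*κ*B - 2*κ*C - B := by
        rw [intervalIntegral.integral_sub (f := fun t => (2*κ) * Real.exp (κ * Real.cos t) - (2*κ) * (Real.cos t * Real.exp (κ * Real.cos t))) ((((continuous_const.mul hE)).sub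
            ((continuous_const.mul hCE))).intervalIntegrable _ _) (hE.intervalIntegrable _ _),
          intervalIntegral.integral_sub (f := fun t => (2*κ) * Real.exp (κ * Real.cos t)) (g := fun t => (2*κ) * (Real.cos t * Real.exp (κ * Real.cos t))) ((continuous_const.mul hE).intervalIntegrable _ _)
            ((continuous_const.mul hCE).intervalIntegrable _ _),
          intervalIntegral.integral_const_mul, intervalIntegral.integral_const_mul]
      rw [← h1]
      apply intervalIntegral.integral_congr
      intro t ht
      ring
    -- circularVariance κ = 1 - C/B
    have hcv : circularVariance κ = 1 - C/B := by
      rw [circularVariance, besselI1, besselI0, ← hBdef, ← hCdef,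
        mul_div_mul_left _ _ (by positivity : (1:ℝ)/(2*π) ≠ 0)]
    have hkey : circularVariance κ - 1/(2*κ) = S / (2*κ*B) := by
      rw [hcv, hS_eq]
      field_simp
    rw [hkey, Real.norm_eq_abs, Real.norm_eq_abs, abs_div,
      abs_of_pos (by positivity : (0:ℝ) < 2*κ*B),
      abs_of_pos (by positivity : (0:ℝ) < 1/κ^2)]
    have hB' : Real.exp κ ≤ 2 * Real.sqrt κ * B := by
      rw [div_le_iff₀ (by positivity)] at hB; linarith
    have h1 : |S| * (κ * Real.sqrt κ) ≤ 32 * Real.exp κ := by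
      rw [le_div_iff₀ (by positivity)] at hS; linarith
    have h2 : |S| * κ * Real.sqrt κ ≤ 64 * B * Real.sqrt κ := by nlinarith
    have h3 : |S| * κ ≤ 64 * B := le_of_mul_le_mul_right (by linarith) hs
    rw [div_le_iff₀ (by positivity : (0:ℝ) < 2*κ*B)]
    have heq2 : 32 * (1/κ^2) * (2*κ*B) = 64 * B / κ := by field_simp; ring
    rw [heq2, le_div_iff₀ hκ0]
    linarith
  refine ⟨?_, hO⟩
  have hq : Tendsto (fun κ:ℝ => 1/κ^2) atTop (nhds 0) := by
    simpa [one_div, Pi.inv_def] using (tendsto_pow_atTop (n := 2) (by norm_num)).inv_tendsto_atTop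
  have h1 : Tendsto (fun κ : ℝ => circularVariance κ - 1/(2*κ)) atTop (nhds 0) :=
    hO.trans_tendsto hq
  have h2 : Tendsto (fun κ:ℝ => 1/(2*κ)) atTop (nhds 0) := by
    have : Tendsto (fun κ:ℝ => 2*κ) atTop atTop :=
      Tendsto.const_mul_atTop (by norm_num) tendsto_id
    simpa [Function.comp_def, one_div, mul_inv, mul_comm] using tendsto_inv_atTop_zero.comp this
  have h3 := h1.add h2
  have heq : (fun κ : ℝ => (circularVariance κ - 1/(2*κ)) + 1/(2*κ)) = circularVariance := by
    funext κ; ring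
  rw [heq] at h3
  simpa using h3
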